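/- Let λ be a partition of N with conjugate partition λ' and with n = λ_1 parts in its first row, and set s_i = 1 + λ'_1 + ⋯ + λ'_{i−1} for 1 ≤ i ≤ n. Then the collection of first row sets of all standard Young tableaux of shape λ equals the collection of bases of the shifted matroid SM(s_1,…,s_n); that is, a set {b_1 < ⋯ < b_n} ⊆ {1,…,N} is the first row set of some standard Young tableau of shape λ if and only if b_i ≤ s_i for all 1 ≤ i ≤ n. -/
import Mathlib

open Finset

lemma cells_filter_col_lt (μ : YoungDiagram) (i : ℕ) :
    (μ.cells.filter (fun p => p.2 < i)).card = ∑ j ∈ Finset.range i, μ.colLen j := by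
  have : μ.cells.filter (fun p => p.2 < i) = (Finset.range i).biUnion (fun j => μ.col j) := by
    ext ⟨a, b⟩
    simp only [mem_filter, mem_biUnion, mem_range, YoungDiagram.mem_col_iff, YoungDiagram.mem_cells]
    constructor
    · rintro ⟨h1, h2⟩; exact ⟨b, h2, h1, rfl⟩
    · rintro ⟨j, hj, h1, rfl⟩; exact ⟨h1, hj⟩
  rw [this, Finset.card_biUnion]
  · exact Finset.sum_congr rfl fun j _ => (μ.colLen_eq_card).symm
  · intro x _ y _ hxy
    simp only [Finset.disjoint_left, YoungDiagram.mem_col_iff]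
    rintro ⟨a, b⟩ ⟨_, h1⟩ ⟨_, h2⟩
    exact hxy (h1 ▸ h2)

lemma sum_colLen_eq_card (μ : YoungDiagram) :
    ∑ j ∈ Finset.range (μ.rowLen 0), μ.colLen j = μ.cells.card := by
  rw [← cells_filter_col_lt]
  congr 1
  apply Finset.filter_true_of_mem
  rintro ⟨a, b⟩ hp
  rw [YoungDiagram.mem_cells] at hp
  rw [← YoungDiagram.mem_iff_lt_rowLen]
  exact μ.up_left_mem (Nat.zero_le _) le_rfl hp

lemma lt_orderEmbOfFin_of_count {C : Finset ℕ} {k : ℕ} (hC : C.card = k) (i : Fin k) {x : ℕ}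
    (h : (C.filter (· ≤ x)).card ≤ (i : ℕ)) : x < C.orderEmbOfFin hC i := by
  by_contra hle
  push_neg at hle
  have hsub : (Finset.Iic i).image (fun t => C.orderEmbOfFin hC t) ⊆ C.filter (· ≤ x) := by
    intro y hy
    simp only [mem_image, mem_Iic] at hy
    obtain ⟨t, ht, rfl⟩ := hy
    exact mem_filter.2 ⟨C.orderEmbOfFin_mem hC t,
      le_trans ((C.orderEmbOfFin hC).monotone ht) hle⟩
  have hcard := Finset.card_le_card hsub
  rw [Finset.card_image_of_injective _ (C.orderEmbOfFin hC).injective, Fin.card_Iic] at hcard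
  omega


/-- `A` is a basis of the shifted matroid `SM(s_0, …, s_{n-1})`: an `n`-element set of
positive integers whose `i`-th smallest element is at most `s i`. -/
def IsShiftedBasis (n : ℕ) (s : Fin n → ℕ) (A : Finset ℕ) : Prop :=
  (∀ a ∈ A, 0 < a) ∧ ∃ h : A.card = n, ∀ i : Fin n, (A.orderIsoOfFin h i : ℕ) ≤ s i

/-- A standard Young tableau of shape `μ`: a bijective filling of the cells of `μ`
(cells are pairs `(row, column)`, 0-indexed) by the values `{1, …, |μ|}` which is
increasing along each row and down each column. -/
structure StandardYT (μ : YoungDiagram) where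
  toFun : ℕ × ℕ → ℕ
  bijOn : Set.BijOn toFun (μ.cells : Set (ℕ × ℕ)) (Set.Icc 1 μ.cells.card)
  row_lt : ∀ i j1 j2 : ℕ, j1 < j2 → (i, j2) ∈ μ → toFun (i, j1) < toFun (i, j2)
  col_lt : ∀ i1 i2 j : ℕ, i1 < i2 → (i2, j) ∈ μ → toFun (i1, j) < toFun (i2, j)

/-- Let `λ` be a partition (Young diagram) with `n = λ_1` cells in its first row, and
set `s_i = 1 + λ'_1 + ⋯ + λ'_{i-1}` (partial sums of the conjugate partition, i.e. of
the column lengths).  Then a set `B` is the first row set of some standard Young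
tableau of shape `λ` if and only if `B` is a basis of the shifted matroid
`SM(s_1, …, s_n)`, i.e. `B = {b_1 < ⋯ < b_n}` with `b_i ≤ s_i` for all `i`. -/
theorem syt_first_row_sets (μ : YoungDiagram) (n : ℕ) (hn : n = μ.rowLen 0)
    (s : Fin n → ℕ) (hs : ∀ i : Fin n, s i = 1 + ∑ j ∈ Finset.range i, μ.colLen j)
    (B : Finset ℕ) :
    (∃ T : StandardYT μ, (μ.row 0).image T.toFun = B) ↔ IsShiftedBasis n s B := by
  constructor
  · rintro ⟨T, rfl⟩
    set N := μ.cells.card with hN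
    have hrowsub : μ.row 0 ⊆ μ.cells := Finset.filter_subset _ _
    have hpos : ∀ a ∈ (μ.row 0).image T.toFun, 0 < a := by
      intro a ha
      obtain ⟨p, hp, rfl⟩ := Finset.mem_image.1 ha
      exact (T.bijOn.mapsTo (Finset.mem_coe.2 (hrowsub hp))).1
    have hinj : Set.InjOn T.toFun ↑(μ.row 0) := T.bijOn.injOn.mono (Finset.coe_subset.2 hrowsub)
    have hcard : ((μ.row 0).image T.toFun).card = n := by
      rw [Finset.card_image_of_injOn hinj, ← μ.rowLen_eq_card, ← hn]
    have hmem0 : ∀ j : Fin n, (0, (j : ℕ)) ∈ μ := by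
      intro j
      rw [YoungDiagram.mem_iff_lt_rowLen, ← hn]
      exact j.2
    set f : Fin n → ℕ := fun j => T.toFun (0, (j : ℕ)) with hf
    have hf_mem : ∀ j : Fin n, f j ∈ (μ.row 0).image T.toFun := by
      intro j
      exact Finset.mem_image.2 ⟨(0, (j : ℕ)), YoungDiagram.mk_mem_row_iff.2 (hmem0 j), rfl⟩
    have hf_mono : StrictMono f := by
      intro a b hab
      exact T.row_lt 0 a b hab (hmem0 b)
    have hEq := Finset.orderEmbOfFin_unique hcard hf_mem hf_mono
    refine ⟨hpos, hcard, fun i => ?_⟩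
    rw [Finset.coe_orderIsoOfFin_apply, ← congrFun hEq i]
    -- bound f i ≤ s i
    have hvIcc := T.bijOn.mapsTo (Finset.mem_coe.2 (hrowsub (YoungDiagram.mk_mem_row_iff.2 (hmem0 i))))
    have hv1 : 1 ≤ f i := hvIcc.1
    have hvN : f i ≤ N := hvIcc.2
    have hsubset : Finset.Icc 1 (f i - 1) ⊆ (μ.cells.filter (fun p => p.2 < (i : ℕ))).image T.toFun := by
      intro w hw
      rw [Finset.mem_Icc] at hw
      have hwN : w ∈ Set.Icc 1 N := ⟨hw.1, by omega⟩
      obtain ⟨p, hp, hpw⟩ := T.bijOn.surjOn hwN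
      obtain ⟨a, b⟩ := p
      have hpμ : (a, b) ∈ μ := Finset.mem_coe.1 hp
      have hbi : b < (i : ℕ) := by
        by_contra hbi
        push_neg at hbi
        have hb : (0, b) ∈ μ := μ.up_left_mem (Nat.zero_le _) le_rfl hpμ
        have h1 : f i ≤ T.toFun (0, b) := by
          rcases eq_or_lt_of_le hbi with h | h
          · rw [hf]; simp [← h]
          · exact le_of_lt (T.row_lt 0 i b h hb)
        have h2 : T.toFun (0, b) ≤ T.toFun (a, b) := by
          rcases Nat.eq_zero_or_pos a with h | h
          · rw [h]
          · exact le_of_lt (T.col_lt 0 a b h hpμ)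
        omega
      exact Finset.mem_image.2 ⟨(a, b), Finset.mem_filter.2 ⟨(μ.mem_cells _).2 hpμ, hbi⟩, hpw⟩
    have hcount : f i - 1 ≤ ∑ j ∈ Finset.range i, μ.colLen j := by
      calc f i - 1 = (Finset.Icc 1 (f i - 1)).card := by rw [Nat.card_Icc]; omega
        _ ≤ ((μ.cells.filter (fun p => p.2 < (i : ℕ))).image T.toFun).card :=
          Finset.card_le_card hsubset
        _ ≤ (μ.cells.filter (fun p => p.2 < (i : ℕ))).card := Finset.card_image_le
        _ = _ := cells_filter_col_lt μ i
    rw [hs i]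
    omega
  · rintro ⟨hpos, hcard, hbound⟩
    set N := μ.cells.card with hN
    have hcol1 : ∀ j < n, 1 ≤ μ.colLen j := by
      intro j hj
      have : (0, j) ∈ μ := by rw [YoungDiagram.mem_iff_lt_rowLen, ← hn]; exact hj
      have := YoungDiagram.mem_iff_lt_colLen.1 this
      omega
    have hsum : ∑ k ∈ Finset.range n, μ.colLen k = N := by rw [hn]; exact sum_colLen_eq_card μ
    set m : ℕ → ℕ := fun j => ∑ k ∈ Finset.range j, (μ.colLen k - 1) with hm
    have hmj : ∀ j ≤ n, m j + j = ∑ k ∈ Finset.range j, μ.colLen k := by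
      intro j hj
      calc m j + j = ∑ k ∈ Finset.range j, ((μ.colLen k - 1) + 1) := by
            rw [Finset.sum_add_distrib, Finset.sum_const, Finset.card_range, smul_eq_mul, mul_one]
        _ = _ := Finset.sum_congr rfl fun k hk =>
            Nat.sub_add_cancel (hcol1 k (lt_of_lt_of_le (Finset.mem_range.1 hk) hj))
    have hmn : m n + n = N := by rw [hmj n le_rfl, hsum]
    have hm_mono : Monotone m := fun a b hab =>
      Finset.sum_le_sum_of_subset (Finset.range_subset_range.2 hab)
    have hmsucc : ∀ j, m (j + 1) = m j + (μ.colLen j - 1) := fun j => Finset.sum_range_succ _ j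
    have hjn : ∀ i j : ℕ, (i, j) ∈ μ → j < n := by
      intro i j hij
      rw [hn, ← YoungDiagram.mem_iff_lt_rowLen]
      exact μ.up_left_mem (Nat.zero_le _) le_rfl hij
    have hidx : ∀ i j : ℕ, (i, j) ∈ μ → 1 ≤ i → m j + (i - 1) < m (j + 1) := by
      intro i j hij hi
      have := YoungDiagram.mem_iff_lt_colLen.1 hij
      rw [hmsucc]
      omega
    have hidxN : ∀ i j : ℕ, (i, j) ∈ μ → 1 ≤ i → m j + (i - 1) < N - n := by
      intro i j hij hi
      have h1 := hidx i j hij hi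
      have h2 : m (j + 1) ≤ m n := hm_mono (hjn i j hij)
      omega
    set b : Fin n ↪o ℕ := B.orderEmbOfFin hcard with hbdef
    have hb : ∀ j : Fin n, b j ≤ s j := by
      intro j
      have := hbound j
      rwa [Finset.coe_orderIsoOfFin_apply] at this
    have hbN : ∀ j : Fin n, b j ≤ N := by
      intro j
      have h1 := hb j
      rw [hs j] at h1
      have h2 : ∑ k ∈ Finset.range ((j : ℕ) + 1), μ.colLen k ≤ ∑ k ∈ Finset.range n, μ.colLen k :=
        Finset.sum_le_sum_of_subset (Finset.range_subset_range.2 j.2)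
      rw [Finset.sum_range_succ] at h2
      have h3 := hcol1 j j.2
      omega
    have hBsub : B ⊆ Finset.Icc 1 N := by
      intro x hx
      have hx' : x ∈ Set.range b := by rw [hbdef, Finset.range_orderEmbOfFin]; exact hx
      obtain ⟨j, rfl⟩ := hx'
      exact Finset.mem_Icc.2 ⟨hpos _ hx, hbN j⟩
    set C : Finset ℕ := Finset.Icc 1 N \ B with hCdef
    have hCcard : C.card = N - n := by
      rw [hCdef, Finset.card_sdiff_of_subset hBsub, Nat.card_Icc, hcard]
      omega
    set c : Fin (N - n) ↪o ℕ := C.orderEmbOfFin hCcard with hcdef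
    have hcC : ∀ t : Fin (N - n), c t ∈ C := fun t => C.orderEmbOfFin_mem hCcard t
    have hcount : ∀ j : Fin n, (C.filter (· ≤ b j)).card ≤ m j := by
      intro j
      have hsub : C.filter (· ≤ b j) ⊆ Finset.Icc 1 (b j) \ (B.filter (· ≤ b j)) := by
        intro x hx
        obtain ⟨hxC, hxle⟩ := Finset.mem_filter.1 hx
        obtain ⟨hxI, hxB⟩ := Finset.mem_sdiff.1 hxC
        exact Finset.mem_sdiff.2 ⟨Finset.mem_Icc.2 ⟨(Finset.mem_Icc.1 hxI).1, hxle⟩,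
          fun h => hxB (Finset.mem_filter.1 h).1⟩
      have hfsub : B.filter (· ≤ b j) ⊆ Finset.Icc 1 (b j) := by
        intro x hx
        obtain ⟨hxB, hxle⟩ := Finset.mem_filter.1 hx
        exact Finset.mem_Icc.2 ⟨hpos _ hxB, hxle⟩
      have hfl : (j : ℕ) + 1 ≤ (B.filter (· ≤ b j)).card := by
        have hsub2 : (Finset.Iic j).image (fun t => b t) ⊆ B.filter (· ≤ b j) := by
          intro y hy
          obtain ⟨t, ht, rfl⟩ := Finset.mem_image.1 hy
          exact Finset.mem_filter.2 ⟨B.orderEmbOfFin_mem hcard t,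
            b.monotone (Finset.mem_Iic.1 ht)⟩
        have := Finset.card_le_card hsub2
        rwa [Finset.card_image_of_injective _ b.injective, Fin.card_Iic] at this
      have h1 := Finset.card_le_card hsub
      rw [Finset.card_sdiff_of_subset hfsub, Nat.card_Icc] at h1
      have h2 := hb j
      rw [hs j] at h2
      have h3 := hmj j (le_of_lt j.2)
      omega
    have hhead : ∀ (j : Fin n) (h : m j < N - n), b j < c ⟨m j, h⟩ := fun j h =>
      lt_orderEmbOfFin_of_count hCcard ⟨m j, h⟩ (hcount j)
    -- the filling
    set F : ℕ × ℕ → ℕ := fun p =>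
      if p.1 = 0 then (if h : p.2 < n then b ⟨p.2, h⟩ else 0)
      else (if h : m p.2 + (p.1 - 1) < N - n then c ⟨m p.2 + (p.1 - 1), h⟩ else 0) with hFdef
    have hF0 : ∀ (j : ℕ) (h : j < n), F (0, j) = b ⟨j, h⟩ := by
      intro j h
      simp only [hFdef, if_pos rfl, dif_pos h]
    have hF1 : ∀ (i j : ℕ) (h : m j + (i - 1) < N - n), 1 ≤ i →
        F (i, j) = c ⟨m j + (i - 1), h⟩ := by
      intro i j h hi
      simp only [hFdef]
      rw [if_neg (by omega), dif_pos h]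
    -- row_lt
    have hrow : ∀ i j1 j2 : ℕ, j1 < j2 → (i, j2) ∈ μ → F (i, j1) < F (i, j2) := by
      intro i j1 j2 hj hmem
      rcases Nat.eq_zero_or_pos i with hi | hi
      · subst hi
        have h2 := hjn 0 j2 hmem
        have h1 : j1 < n := lt_trans hj h2
        rw [hF0 j1 h1, hF0 j2 h2]
        exact b.strictMono (Fin.mk_lt_mk.2 hj)
      · have hmem1 : (i, j1) ∈ μ := μ.up_left_mem le_rfl (le_of_lt hj) hmem
        have hi2 := hidxN i j2 hmem hi
        have hlt : m j1 + (i - 1) < m j2 + (i - 1) := by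
          have ha := hidx i j1 hmem1 hi
          have hb2 : m (j1 + 1) ≤ m j2 := hm_mono hj
          omega
        have hi1 : m j1 + (i - 1) < N - n := by omega
        rw [hF1 i j1 hi1 hi, hF1 i j2 hi2 hi]
        exact c.strictMono (Fin.mk_lt_mk.2 hlt)
    -- col_lt
    have hcol : ∀ i1 i2 j : ℕ, i1 < i2 → (i2, j) ∈ μ → F (i1, j) < F (i2, j) := by
      intro i1 i2 j h12 hmem
      have hi2 : 1 ≤ i2 := by omega
      have hidn : m j + (i2 - 1) < N - n := hidxN i2 j hmem hi2
      rcases Nat.eq_zero_or_pos i1 with hi1 | hi1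
      · subst hi1
        have hjlt := hjn i2 j hmem
        have hmjn : m j < N - n := by omega
        rw [hF0 j hjlt, hF1 i2 j hidn hi2]
        calc b ⟨j, hjlt⟩ < c ⟨m j, hmjn⟩ := hhead ⟨j, hjlt⟩ hmjn
          _ ≤ c ⟨m j + (i2 - 1), hidn⟩ := c.monotone (Fin.mk_le_mk.2 (by omega))
      · have hi1' : m j + (i1 - 1) < N - n := by omega
        rw [hF1 i1 j hi1' hi1, hF1 i2 j hidn hi2]
        exact c.strictMono (Fin.mk_lt_mk.2 (by omega))
    -- classify values on cells
    have hFval : ∀ p : ℕ × ℕ, p ∈ μ → (p.1 = 0 ∧ F p ∈ B) ∨ (1 ≤ p.1 ∧ F p ∈ C) := by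
      rintro ⟨i, j⟩ hp
      rcases Nat.eq_zero_or_pos i with hi | hi
      · subst hi
        left
        refine ⟨rfl, ?_⟩
        rw [hF0 j (hjn 0 j hp)]
        exact B.orderEmbOfFin_mem hcard _
      · right
        refine ⟨hi, ?_⟩
        rw [hF1 i j (hidxN i j hp hi) hi]
        exact hcC _
    have hmaps : Set.MapsTo F (μ.cells : Set (ℕ × ℕ)) (Set.Icc 1 N) := by
      intro p hp
      have hp' : p ∈ μ := Finset.mem_coe.1 hp
      rcases hFval p hp' with ⟨_, hm'⟩ | ⟨_, hm'⟩
      · exact Finset.mem_Icc.1 (hBsub hm')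
      · rw [hCdef, Finset.mem_sdiff] at hm'
        exact Finset.mem_Icc.1 hm'.1
    have hinjOn : Set.InjOn F (μ.cells : Set (ℕ × ℕ)) := by
      rintro ⟨i1, j1⟩ hp1 ⟨i2, j2⟩ hp2 heq
      have hp1' : (i1, j1) ∈ μ := Finset.mem_coe.1 hp1
      have hp2' : (i2, j2) ∈ μ := Finset.mem_coe.1 hp2
      rcases Nat.eq_zero_or_pos i1 with hi1 | hi1 <;> rcases Nat.eq_zero_or_pos i2 with hi2 | hi2
      · subst hi1; subst hi2
        rw [hF0 j1 (hjn 0 j1 hp1'), hF0 j2 (hjn 0 j2 hp2')] at heq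
        have := b.injective heq
        rw [Fin.mk_eq_mk] at this
        rw [this]
      · exfalso
        subst hi1
        rcases hFval (i2, j2) hp2' with ⟨h0, _⟩ | ⟨_, hmC⟩
        · omega
        · rw [← heq, hF0 j1 (hjn 0 j1 hp1')] at hmC
          rw [hCdef, Finset.mem_sdiff] at hmC
          exact hmC.2 (B.orderEmbOfFin_mem hcard _)
      · exfalso
        subst hi2
        rcases hFval (i1, j1) hp1' with ⟨h0, _⟩ | ⟨_, hmC⟩
        · omega
        · rw [heq, hF0 j2 (hjn 0 j2 hp2')] at hmC
          rw [hCdef, Finset.mem_sdiff] at hmC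
          exact hmC.2 (B.orderEmbOfFin_mem hcard _)
      · rw [hF1 i1 j1 (hidxN i1 j1 hp1' hi1) hi1, hF1 i2 j2 (hidxN i2 j2 hp2' hi2) hi2] at heq
        have hval := c.injective heq
        rw [Fin.mk_eq_mk] at hval
        have hjeq : j1 = j2 := by
          by_contra hne
          rcases Nat.lt_or_ge j1 j2 with hlt | hge
          · have ha := hidx i1 j1 hp1' hi1
            have hb2 : m (j1 + 1) ≤ m j2 := hm_mono hlt
            omega
          · have hlt : j2 < j1 := by omega
            have ha := hidx i2 j2 hp2' hi2
            have hb2 : m (j2 + 1) ≤ m j1 := hm_mono hlt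
            omega
        subst hjeq
        have : i1 = i2 := by omega
        rw [this]
    have himg : μ.cells.image F = Finset.Icc 1 N := by
      apply Finset.eq_of_subset_of_card_le
      · intro x hx
        obtain ⟨p, hp, rfl⟩ := Finset.mem_image.1 hx
        exact Finset.mem_Icc.2 (hmaps (Finset.mem_coe.2 hp))
      · rw [Nat.card_Icc, Finset.card_image_of_injOn hinjOn]
        omega
    have hsurj : Set.SurjOn F (μ.cells : Set (ℕ × ℕ)) (Set.Icc 1 N) := by
      intro x hx
      have hx' : x ∈ (Finset.Icc 1 N : Finset ℕ) := Finset.mem_Icc.2 hx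
      rw [← himg] at hx'
      obtain ⟨p, hp, rfl⟩ := Finset.mem_image.1 hx'
      exact ⟨p, Finset.mem_coe.2 hp, rfl⟩
    refine ⟨⟨F, ⟨hmaps, hinjOn, hsurj⟩, hrow, hcol⟩, ?_⟩
    apply Finset.Subset.antisymm
    · intro x hx
      obtain ⟨p, hp, rfl⟩ := Finset.mem_image.1 hx
      obtain ⟨hpμ, hp0⟩ := YoungDiagram.mem_row_iff.1 hp
      obtain ⟨i, j⟩ := p
      simp only at hp0
      subst hp0
      show F (0, j) ∈ B
      rw [hF0 j (hjn 0 j hpμ)]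
      exact B.orderEmbOfFin_mem hcard _
    · intro x hx
      have hx' : x ∈ Set.range b := by rw [hbdef, Finset.range_orderEmbOfFin]; exact hx
      obtain ⟨j, rfl⟩ := hx'
      have hjmem : (0, (j : ℕ)) ∈ μ := by
        rw [YoungDiagram.mem_iff_lt_rowLen, ← hn]; exact j.2
      refine Finset.mem_image.2 ⟨(0, (j : ℕ)), YoungDiagram.mk_mem_row_iff.2 hjmem, ?_⟩
      show F (0, (j : ℕ)) = b j
      rw [hF0 (j : ℕ) j.2]
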